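/- Let ε>0, u*>0 and Δ>0. Then there exists a unique h>0 such that tanh( (u*Δ/(2ε))·(1+h) ) = 1/(1+h), and this h satisfies h ≤ 2/(e^{u*Δ/ε} − 1). -/

import Mathlib

private lemma tanh_formula (x : ℝ) :
    Real.tanh x = (Real.exp (2*x) - 1) / (Real.exp (2*x) + 1) := by
  rw [Real.tanh_eq_sinh_div_cosh, Real.sinh_eq, Real.cosh_eq, two_mul, Real.exp_add,
    Real.exp_neg]
  have hx := Real.exp_pos x
  have h1 : Real.exp x + (Real.exp x)⁻¹ ≠ 0 := by positivity
  rw [div_div_div_eq, div_eq_div_iff (by positivity) (by positivity)]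
  field_simp

private lemma tanh_lt_tanh {x y : ℝ} (h : x < y) : Real.tanh x < Real.tanh y := by
  rw [tanh_formula, tanh_formula]
  have hE : Real.exp (2*x) < Real.exp (2*y) := Real.exp_lt_exp.2 (by linarith)
  have hA := Real.exp_pos (2*x)
  have hB := Real.exp_pos (2*y)
  rw [div_lt_div_iff₀ (by positivity) (by positivity)]
  nlinarith

private lemma continuous_tanh : Continuous Real.tanh := by
  have : Real.tanh = fun x => Real.sinh x / Real.cosh x := by
    funext x; exact Real.tanh_eq_sinh_div_cosh x
  rw [this]
  exact Real.continuous_sinh.div Real.continuous_cosh fun x => (Real.cosh_pos x).ne'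

/-- There is a unique `h > 0` with `tanh((u*Δ/(2ε))(1+h)) = 1/(1+h)`, and it
satisfies `h ≤ 2/(e^{u*Δ/ε} − 1)`. -/
theorem stmt7 (ε ustar Δ : ℝ) (hε : 0 < ε) (hu : 0 < ustar) (hΔ : 0 < Δ) :
    ∃ h : ℝ, (0 < h ∧ Real.tanh ((ustar * Δ / (2 * ε)) * (1 + h)) = 1 / (1 + h))
      ∧ (∀ h' : ℝ, 0 < h' →
          Real.tanh ((ustar * Δ / (2 * ε)) * (1 + h')) = 1 / (1 + h') → h' = h)
      ∧ h ≤ 2 / (Real.exp (ustar * Δ / ε) - 1) := by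
  set a : ℝ := ustar * Δ / (2 * ε) with ha_def
  have ha : 0 < a := by positivity
  have h2a : ustar * Δ / ε = 2 * a := by rw [ha_def]; field_simp
  set E : ℝ := Real.exp (2 * a) with hE_def
  have hE1 : 1 < E := Real.one_lt_exp_iff.2 (by positivity)
  set h0 : ℝ := 2 / (E - 1) with hh0_def
  have hh0 : 0 < h0 := div_pos two_pos (by linarith)
  -- the function
  set g : ℝ → ℝ := fun h => Real.tanh (a * (1 + h)) - 1 / (1 + h) with hg_def
  -- g strictly increasing on nonnegatives
  have gmono : ∀ x y : ℝ, 0 ≤ x → x < y → g x < g y := by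
    intro x y hx hxy
    have h1 : Real.tanh (a * (1 + x)) < Real.tanh (a * (1 + y)) :=
      tanh_lt_tanh (by nlinarith)
    have h2 : 1 / (1 + y) < 1 / (1 + x) :=
      one_div_lt_one_div_of_lt (by linarith) (by linarith)
    simp only [hg_def]
    linarith
  -- key identity: tanh a = 1 / (1 + h0)
  have hkey : Real.tanh a = 1 / (1 + h0) := by
    rw [tanh_formula]
    have hE0 : (0:ℝ) < E - 1 := by linarith
    rw [hh0_def]
    rw [div_eq_div_iff (by positivity) (by positivity)]
    field_simp
    ring
  have hg0 : g 0 < 0 := by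
    have : Real.tanh a < 1 / (1 + (0:ℝ)) := by
      rw [hkey]
      exact one_div_lt_one_div_of_lt (by norm_num) (by linarith)
    simp only [hg_def]
    simpa using this
  have hgh0 : 0 < g h0 := by
    have h1 : Real.tanh a < Real.tanh (a * (1 + h0)) := tanh_lt_tanh (by nlinarith)
    simp only [hg_def]
    rw [← hkey]; linarith
  -- continuity
  have gcont : ContinuousOn g (Set.Icc 0 h0) := by
    apply ContinuousOn.sub
    · exact (continuous_tanh.comp (continuous_const.mul (continuous_const.add continuous_id))).continuousOn
    · apply ContinuousOn.div continuousOn_const (continuous_const.add continuous_id).continuousOn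
      intro x hx
      have := hx.1
      intro hcon; simp only [Pi.add_apply, id] at hcon; linarith
  have := intermediate_value_Ioo (le_of_lt hh0) gcont
  have hmem : (0:ℝ) ∈ Set.Ioo (g 0) (g h0) := ⟨hg0, hgh0⟩
  obtain ⟨h, hhmem, hgh⟩ := this hmem
  refine ⟨h, ⟨hhmem.1, ?_⟩, ?_, ?_⟩
  · have : g h = 0 := hgh
    simp only [hg_def] at this
    linarith
  · intro h' hh' heq
    have hgh' : g h' = 0 := by simp only [hg_def]; linarith [heq]
    rcases lt_trichotomy h' h with hlt | heq2 | hgt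
    · exfalso
      have := gmono h' h (le_of_lt hh') hlt
      rw [hgh', hgh] at this; exact lt_irrefl 0 this
    · exact heq2
    · exfalso
      have := gmono h h' (le_of_lt hhmem.1) hgt
      rw [hgh', hgh] at this; exact lt_irrefl 0 this
  · rw [h2a, ← hE_def, ← hh0_def]
    exact le_of_lt hhmem.2
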